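/- arXiv:2409.01377 — 4 statements merged into one kernel-verified Lean document; each statement's English description precedes it below -/
import Mathlib

section
/- Let S ⊆ ℕ be sum-closed (for every k ∈ S and every f : Fin k → ℕ with all values in S, ∑ i, f i ∈ S) such that (i) if S is nonempty then 1 ∈ S, and (ii) for all m, n ∈ ℕ with m + n ∈ S and m + n ≠ 1, both m ∈ S and n ∈ S. Then S is one of ∅, {1}, {0,1}, or ℕ. -/
def SumClosed (S : Set ℕ) : Prop :=
  ∀ k ∈ S, ∀ f : Fin k → ℕ, (∀ i, f i ∈ S) → (∑ i, f i) ∈ S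

theorem stmt_5 (S : Set ℕ) (hS : SumClosed S)
    (hone : S.Nonempty → 1 ∈ S)
    (haeu : ∀ m n : ℕ, m + n ∈ S → m + n ≠ 1 → m ∈ S ∧ n ∈ S) :
    S = ∅ ∨ S = {1} ∨ S = {0, 1} ∨ S = Set.univ := by
  by_cases hne : S.Nonempty
  · have h1 : 1 ∈ S := hone hne
    by_cases h2 : ∃ k ∈ S, 2 ≤ k
    · right; right; right
      obtain ⟨k, hk, hk2⟩ := h2
      have h2S : 2 ∈ S := by
        have := haeu 2 (k - 2) (by rwa [Nat.add_sub_cancel' hk2]) (by omega)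
        exact this.1
      have h0S : 0 ∈ S := (haeu 0 2 h2S (by omega)).1
      have step : ∀ n, n ∈ S → n + 1 ∈ S := by
        intro n hn
        have := hS 2 h2S ![n, 1] (by
          intro i; fin_cases i <;> simpa)
        simpa [Fin.sum_univ_two] using this
      have all : ∀ n, n ∈ S := by
        intro n
        induction n with
        | zero => exact h0S
        | succ m ih => exact step m ih
      ext n; simp [all n]
    · push_neg at h2
      by_cases h0 : 0 ∈ S
      · right; right; left
        ext n
        simp only [Set.mem_insert_iff, Set.mem_singleton_iff]
        constructor
        · intro hn; have := h2 n hn; omega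
        · rintro (rfl | rfl) <;> assumption
      · right; left
        ext n
        simp only [Set.mem_singleton_iff]
        constructor
        · intro hn
          have := h2 n hn
          interval_cases n
          · exact absurd hn h0
          · rfl
        · rintro rfl; exact h1
  · left
    exact Set.not_nonempty_iff_eq_empty.mp hne
end

section
/- Let π : C → D be a monotone map of partial orders admitting both a Galois connection left adjoint L ⊣ π and a Galois connection right adjoint π ⊣ R. Then π ∘ L = id_D if and only if π ∘ R = id_D; i.e. the left adjoint is fully faithful if and only if the right adjoint is fully faithful. -/
theorem stmt_10 {C D : Type*} [PartialOrder C] [PartialOrder D]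
    (π : C → D) (hπ : Monotone π)
    (L : D → C) (hL : Monotone L) (hgcL : ∀ c d, L d ≤ c ↔ d ≤ π c)
    (R : D → C) (hR : Monotone R) (hgcR : ∀ c d, π c ≤ d ↔ c ≤ R d) :
    (∀ d, π (L d) = d) ↔ (∀ d, π (R d) = d) := by
  constructor
  · intro h d
    refine le_antisymm ((hgcR (R d) d).mpr le_rfl) ?_
    have : L d ≤ R d := (hgcR (L d) d).mp (le_of_eq (h d))
    calc d = π (L d) := (h d).symm
      _ ≤ π (R d) := hπ this
  · intro h d
    refine le_antisymm ?_ ((hgcL (L d) d).mp le_rfl)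
    have : L d ≤ R d := (hgcL (R d) d).mpr (le_of_eq (h d).symm)
    calc π (L d) ≤ π (R d) := hπ this
      _ = d := h d
end

section
/- Define a transfer system on the chain Fin 3 = {0 < 1 < 2} to be a relation R on Fin 3 such that: R i j implies i ≤ j; R is reflexive; R is transitive; and if R i j and k ≤ j then R (min i k) k. There are exactly 5 transfer systems on Fin 3. -/
private def T0 : Fin 3 → Fin 3 → Prop := fun i j => i = j
private def T1 : Fin 3 → Fin 3 → Prop := fun i j => i = j ∨ (i = 0 ∧ j = 1)
private def T2 : Fin 3 → Fin 3 → Prop := fun i j => i = j ∨ (i = 1 ∧ j = 2)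
private def T3 : Fin 3 → Fin 3 → Prop := fun i j => i = j ∨ (i = 0 ∧ (j = 1 ∨ j = 2))
private def T4 : Fin 3 → Fin 3 → Prop := fun i j => i ≤ j

theorem stmt_13 :
    Set.ncard {R : Fin 3 → Fin 3 → Prop |
      (∀ i j, R i j → i ≤ j) ∧ (∀ i, R i i) ∧
      (∀ i j k, R i j → R j k → R i k) ∧
      (∀ i j k, R i j → k ≤ j → R (min i k) k)} = 5 := by
  have hset : {R : Fin 3 → Fin 3 → Prop |
      (∀ i j, R i j → i ≤ j) ∧ (∀ i, R i i) ∧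
      (∀ i j k, R i j → R j k → R i k) ∧
      (∀ i j k, R i j → k ≤ j → R (min i k) k)} = {T0, T1, T2, T3, T4} := by
    ext R
    constructor
    · rintro ⟨h1, h2, h3, h4⟩
      have n10 : ¬ R 1 0 := fun h => absurd (h1 _ _ h) (by decide)
      have n20 : ¬ R 2 0 := fun h => absurd (h1 _ _ h) (by decide)
      have n21 : ¬ R 2 1 := fun h => absurd (h1 _ _ h) (by decide)
      have r00 : R 0 0 := h2 0
      have r11 : R 1 1 := h2 1
      have r22 : R 2 2 := h2 2
      by_cases a : R 0 1 <;> by_cases b : R 1 2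
      · -- all: T4
        have c : R 0 2 := h3 _ _ _ a b
        have : R = T4 := by
          funext i j
          fin_cases i <;> fin_cases j <;> simp_all [T4]
        simp [this]
      · -- a, ¬b
        by_cases c : R 0 2
        · have : R = T3 := by
            funext i j
            fin_cases i <;> fin_cases j <;> simp_all [T3]
          simp [this]
        · have : R = T1 := by
            funext i j
            fin_cases i <;> fin_cases j <;> simp_all [T1]
          simp [this]
      · -- ¬a, b
        have c : ¬ R 0 2 := fun h => a (by simpa using h4 0 2 1 h (by decide))
        have : R = T2 := by
          funext i j
          fin_cases i <;> fin_cases j <;> simp_all [T2]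
        simp [this]
      · -- ¬a, ¬b
        have c : ¬ R 0 2 := fun h => a (by simpa using h4 0 2 1 h (by decide))
        have : R = T0 := by
          funext i j
          fin_cases i <;> fin_cases j <;> simp_all [T0]
        simp [this]
    · intro hR
      rcases hR with h | h | h | h | h <;> subst h <;>
        refine ⟨?_, ?_, ?_, ?_⟩ <;> simp only [T0, T1, T2, T3, T4] <;> decide
  rw [hset]
  have d01 : T0 ≠ T1 := fun h => by have := congrFun (congrFun h 0) 1; simp [T0, T1] at this
  have d02 : T0 ≠ T2 := fun h => by have := congrFun (congrFun h 1) 2; simp [T0, T2] at this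
  have d03 : T0 ≠ T3 := fun h => by have := congrFun (congrFun h 0) 1; simp [T0, T3] at this
  have d04 : T0 ≠ T4 := fun h => by have := congrFun (congrFun h 0) 1; simp [T0, T4] at this
  have d12 : T1 ≠ T2 := fun h => by have := congrFun (congrFun h 0) 1; simp [T1, T2] at this
  have d13 : T1 ≠ T3 := fun h => by have := congrFun (congrFun h 0) 2; simp [T1, T3] at this
  have d14 : T1 ≠ T4 := fun h => by have := congrFun (congrFun h 0) 2; simp [T1, T4] at this
  have d23 : T2 ≠ T3 := fun h => by have := congrFun (congrFun h 0) 1; simp [T2, T3] at this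
  have d24 : T2 ≠ T4 := fun h => by have := congrFun (congrFun h 0) 1; simp [T2, T4] at this
  have d34 : T3 ≠ T4 := fun h => by have := congrFun (congrFun h 1) 2; simp [T3, T4] at this
  rw [Set.ncard_insert_of_notMem (by simp [d01, d02, d03, d04]),
      Set.ncard_insert_of_notMem (by simp [d12, d13, d14]),
      Set.ncard_insert_of_notMem (by simp [d23, d24]),
      Set.ncard_insert_of_notMem (by simp [d34]),
      Set.ncard_singleton]
end

section
/- Let S ⊆ ℕ be sum-closed (for every k ∈ S and every f : Fin k → ℕ with all values in S, ∑ i, f i ∈ S) with 0 ∈ S and 1 ∈ S. Define M := {k ∈ ℕ : for every f : Fin k → ℕ with f i ∈ S for all i, ∏ i, f i ∈ S}. Then 0 ∈ M, 1 ∈ M, and M is closed under addition: a, b ∈ M implies a + b ∈ M. -/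
theorem stmt_15 (S : Set ℕ) (hS : SumClosed S) (h0 : 0 ∈ S) (h1 : 1 ∈ S) :
    0 ∈ {k : ℕ | ∀ f : Fin k → ℕ, (∀ i, f i ∈ S) → (∏ i, f i) ∈ S} ∧
    1 ∈ {k : ℕ | ∀ f : Fin k → ℕ, (∀ i, f i ∈ S) → (∏ i, f i) ∈ S} ∧
    ∀ a ∈ {k : ℕ | ∀ f : Fin k → ℕ, (∀ i, f i ∈ S) → (∏ i, f i) ∈ S},
      ∀ b ∈ {k : ℕ | ∀ f : Fin k → ℕ, (∀ i, f i ∈ S) → (∏ i, f i) ∈ S},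
        a + b ∈ {k : ℕ | ∀ f : Fin k → ℕ, (∀ i, f i ∈ S) → (∏ i, f i) ∈ S} := by
  have hmul : ∀ x ∈ S, ∀ y ∈ S, x * y ∈ S := by
    intro x hx y hy
    have := hS x hx (fun _ => y) (fun _ => hy)
    simpa [Finset.sum_const, mul_comm] using this
  refine ⟨?_, ?_, ?_⟩
  · intro f _; simpa using h1
  · intro f hf; simpa using hf 0
  · intro a ha b hb f hf
    rw [Set.mem_setOf_eq] at *
    rw [Fin.prod_univ_add]
    exact hmul _ (ha _ fun i => hf _) _ (hb _ fun i => hf _)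
end
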